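/- For every n = 1, …, N and every s ∈ [0,1], the point on the segment between θ̂ and θ_{∖n} satisfies |x_nᵀ((1−s)θ̂ + s θ_{∖n})| ≤ |x_nᵀθ̂| + |D_n^{(1)}| · ‖x_n‖₂² / (N λ). -/

import Mathlib

open Matrix BigOperators RealInnerProductSpace

namespace Stmt10Aux

variable {D : ℕ}

def IsCvx (C : (Fin D → ℝ) → ℝ) : Prop :=
  ∀ u v : Fin D → ℝ, ∀ t : ℝ, 0 ≤ t → t ≤ 1 →
    C ((1 - t) • u + t • v) ≤ (1 - t) * C u + t * C v

lemma dot_self_nonneg' (u : Fin D → ℝ) : 0 ≤ u ⬝ᵥ u :=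
  Finset.sum_nonneg fun _ _ => mul_self_nonneg _

lemma seg_dot (u v : Fin D → ℝ) (t : ℝ) :
    ((1 - t) • u + t • v) ⬝ᵥ ((1 - t) • u + t • v)
      = (1 - t) * (u ⬝ᵥ u) + t * (v ⬝ᵥ v) - t * (1 - t) * ((u - v) ⬝ᵥ (u - v)) := by
  simp only [dotProduct, Pi.add_apply, Pi.smul_apply, Pi.sub_apply, smul_eq_mul,
    Finset.mul_sum, ← Finset.sum_add_distrib, ← Finset.sum_sub_distrib]
  exact Finset.sum_congr rfl fun i _ => by ring

lemma dot_seg (w u v : Fin D → ℝ) (t : ℝ) :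
    w ⬝ᵥ ((1 - t) • u + t • v) = (1 - t) * (w ⬝ᵥ u) + t * (w ⬝ᵥ v) := by
  simp only [dotProduct, Pi.add_apply, Pi.smul_apply, smul_eq_mul,
    Finset.mul_sum, ← Finset.sum_add_distrib]
  exact Finset.sum_congr rfl fun i _ => by ring

lemma dot_sub_symm (u v : Fin D → ℝ) : (u - v) ⬝ᵥ (u - v) = (v - u) ⬝ᵥ (v - u) := by
  simp only [dotProduct, Pi.sub_apply]
  exact Finset.sum_congr rfl fun i _ => by ring

lemma IsCvx.add {C₁ C₂ : (Fin D → ℝ) → ℝ} (h1 : IsCvx C₁) (h2 : IsCvx C₂) :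
    IsCvx fun θ => C₁ θ + C₂ θ := by
  intro u v t ht0 ht1
  have a1 := h1 u v t ht0 ht1
  have a2 := h2 u v t ht0 ht1
  dsimp only
  linarith

lemma IsCvx.const_mul {C : (Fin D → ℝ) → ℝ} (h : IsCvx C) (c : ℝ) (hc : 0 ≤ c) :
    IsCvx fun θ => c * C θ := by
  intro u v t ht0 ht1
  dsimp only
  nlinarith [h u v t ht0 ht1]

lemma isCvx_sum {ι : Type*} (s : Finset ι) (C : ι → (Fin D → ℝ) → ℝ)
    (h : ∀ i ∈ s, IsCvx (C i)) : IsCvx fun θ => ∑ i ∈ s, C i θ := by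
  intro u v t ht0 ht1
  dsimp only
  calc ∑ i ∈ s, C i ((1 - t) • u + t • v) ≤ ∑ i ∈ s, ((1 - t) * C i u + t * C i v) :=
        Finset.sum_le_sum fun i hi => h i hi u v t ht0 ht1
    _ = (1 - t) * ∑ i ∈ s, C i u + t * ∑ i ∈ s, C i v := by
        rw [Finset.sum_add_distrib, Finset.mul_sum, Finset.mul_sum]

lemma isCvx_affine (c d : ℝ) (w : Fin D → ℝ) :
    IsCvx fun θ => c + d * (w ⬝ᵥ θ) := by
  intro u v t ht0 ht1
  dsimp only
  rw [dot_seg]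
  exact le_of_eq (by ring)

lemma isCvx_comp (g : ℝ → ℝ) (hg : ConvexOn ℝ Set.univ g) (w : Fin D → ℝ) :
    IsCvx fun θ => g (w ⬝ᵥ θ) := by
  intro u v t ht0 ht1
  dsimp only
  rw [dot_seg]
  have := hg.2 (Set.mem_univ (w ⬝ᵥ u)) (Set.mem_univ (w ⬝ᵥ v))
    (by linarith : (0:ℝ) ≤ 1 - t) ht0 (by ring)
  simpa [smul_eq_mul] using this

lemma strong_cvx (C : (Fin D → ℝ) → ℝ) (hC : IsCvx C) (lam : ℝ) (hlam : 0 ≤ lam) :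
    IsCvx fun θ => C θ + lam / 2 * (θ ⬝ᵥ θ) := by
  intro u v t ht0 ht1
  dsimp only
  rw [seg_dot]
  have h := hC u v t ht0 ht1
  nlinarith [mul_nonneg (mul_nonneg ht0 (by linarith : (0:ℝ) ≤ 1 - t)) (dot_self_nonneg' (u - v)),
    mul_nonneg hlam (mul_nonneg (mul_nonneg ht0 (by linarith : (0:ℝ) ≤ 1 - t)) (dot_self_nonneg' (u - v)))]

lemma growth (C : (Fin D → ℝ) → ℝ) (hC : IsCvx C) (lam : ℝ) (hlam : 0 < lam)
    (w : Fin D → ℝ)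
    (hw : ∀ θ, C w + lam / 2 * (w ⬝ᵥ w) ≤ C θ + lam / 2 * (θ ⬝ᵥ θ)) (θ : Fin D → ℝ) :
    C w + lam / 2 * (w ⬝ᵥ w) + lam / 2 * ((w - θ) ⬝ᵥ (w - θ)) ≤ C θ + lam / 2 * (θ ⬝ᵥ θ) := by
  set Q := (w - θ) ⬝ᵥ (w - θ) with hQ
  have hQ0 : 0 ≤ Q := dot_self_nonneg' _
  set M := (C θ + lam / 2 * (θ ⬝ᵥ θ)) - (C w + lam / 2 * (w ⬝ᵥ w)) with hM
  have hM0 : 0 ≤ M := by have := hw θ; simp only [hM]; linarith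
  have key : ∀ t : ℝ, 0 < t → t ≤ 1 → lam / 2 * ((1 - t) * Q) ≤ M := by
    intro t ht0 ht1
    have h1 := hw ((1 - t) • w + t • θ)
    rw [seg_dot] at h1
    have h2 := hC w θ t ht0.le ht1
    have h3 : t * (lam / 2 * ((1 - t) * Q)) ≤ t * M := by simp only [hM]; nlinarith
    exact le_of_mul_le_mul_left h3 ht0
  have htends : Filter.Tendsto (fun t : ℝ => lam / 2 * ((1 - t) * Q)) (nhdsWithin 0 (Set.Ioi 0))
      (nhds (lam / 2 * Q)) := by
    have hc : Continuous fun t : ℝ => lam / 2 * ((1 - t) * Q) := by continuity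
    have := hc.tendsto 0
    simpa using this.mono_left nhdsWithin_le_nhds
  have hfin : lam / 2 * Q ≤ M := by
    refine le_of_tendsto htends ?_
    filter_upwards [Ioc_mem_nhdsGT_of_mem (Set.mem_Ico.mpr ⟨le_refl (0:ℝ), zero_lt_one⟩)] with t ht
    exact key t ht.1 ht.2
  simp only [hM] at hfin
  linarith

end Stmt10Aux


open Stmt10Aux

set_option maxHeartbeats 1000000 in
theorem stmt_10
    (N D : ℕ) (hN : 1 ≤ N) (hD : 1 ≤ D)
    (x : Fin N → Fin D → ℝ) (y : Fin N → ℝ)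
    (lam : ℝ) (hlam : 0 < lam)
    (f : ℝ → ℝ → ℝ)
    (hconv : ∀ c : ℝ, ConvexOn ℝ Set.univ (fun z => f z c))
    (hsmooth : ∀ c : ℝ, ContDiff ℝ 1 (fun z => f z c))
    (F : (Fin D → ℝ) → ℝ)
    (hF : F = fun θ => (1 / N : ℝ) * ∑ n, f (x n ⬝ᵥ θ) (y n) + lam / 2 * (θ ⬝ᵥ θ))
    (Floo : Fin N → (Fin D → ℝ) → ℝ)
    (hFloo : ∀ n, Floo n = fun θ =>
      (1 / N : ℝ) * ∑ m ∈ Finset.univ.erase n, f (x m ⬝ᵥ θ) (y m) + lam / 2 * (θ ⬝ᵥ θ))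
    (θhat : Fin D → ℝ)
    (hθhat : ∀ θ, F θhat ≤ F θ)
    (hθhatU : ∀ θ, (∀ θ', F θ ≤ F θ') → θ = θhat)
    (θloo : Fin N → Fin D → ℝ)
    (hθloo : ∀ n θ, Floo n (θloo n) ≤ Floo n θ)
    (hθlooU : ∀ n θ, (∀ θ', Floo n θ ≤ Floo n θ') → θ = θloo n)
    (D1 : Fin N → ℝ)
    (hD1 : ∀ n, D1 n = deriv (fun z => f z (y n)) (x n ⬝ᵥ θhat))
    :
    ∀ n : Fin N, ∀ s ∈ Set.Icc (0 : ℝ) 1,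
      |x n ⬝ᵥ ((1 - s) • θhat + s • θloo n)| ≤
        |x n ⬝ᵥ θhat| + |D1 n| * (x n ⬝ᵥ x n) / (N * lam) := by
  have hNpos : (0:ℝ) < N := by exact_mod_cast lt_of_lt_of_le zero_lt_one hN
  have hNinv : (0:ℝ) < 1 / N := by positivity
  intro n s hs
  obtain ⟨hs0, hs1⟩ := hs
  obtain ⟨a, ha⟩ : ∃ a : ℝ, a = x n ⬝ᵥ θhat := ⟨_, rfl⟩
  obtain ⟨g, hg⟩ : ∃ g : ℝ → ℝ, g = fun z => f z (y n) := ⟨_, rfl⟩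
  have hd : HasDerivAt g (D1 n) a := by
    rw [hg, ha, hD1 n]
    exact (((hsmooth (y n)).differentiable one_ne_zero) _).hasDerivAt
  have hsplit : ∀ θ, F θ = Floo n θ + (1/N : ℝ) * g (x n ⬝ᵥ θ) := by
    intro θ
    rw [hF, hFloo n]
    simp only [hg]
    rw [← Finset.add_sum_erase _ _ (Finset.mem_univ n)]
    ring
  obtain ⟨L, hL⟩ : ∃ L : (Fin D → ℝ) → ℝ,
      L = fun θ => g a + D1 n * (x n ⬝ᵥ θ - a) := ⟨_, rfl⟩
  obtain ⟨G, hGdef⟩ : ∃ G : (Fin D → ℝ) → ℝ,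
      G = fun θ => Floo n θ + (1/N : ℝ) * L θ := ⟨_, rfl⟩
  obtain ⟨Cloo, hCloo⟩ : ∃ C : (Fin D → ℝ) → ℝ,
      C = fun θ => (1/N : ℝ) * ∑ m ∈ Finset.univ.erase n, f (x m ⬝ᵥ θ) (y m) := ⟨_, rfl⟩
  have hFlooEq : ∀ θ, Floo n θ = Cloo θ + lam / 2 * (θ ⬝ᵥ θ) := by
    intro θ; rw [hFloo n, hCloo]
  have hClooCvx : IsCvx Cloo := by
    rw [hCloo]
    exact (isCvx_sum _ _ fun m _ => isCvx_comp _ (hconv (y m)) (x m)).const_mul _ hNinv.le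
  have hLCvx : IsCvx fun θ => (1/N : ℝ) * L θ := by
    have h := isCvx_affine (D := D) ((1/N : ℝ) * (g a - D1 n * a)) ((1/N : ℝ) * D1 n) (x n)
    have he : (fun θ => (1/N : ℝ) * L θ)
        = fun θ => (1/N : ℝ) * (g a - D1 n * a) + ((1/N : ℝ) * D1 n) * (x n ⬝ᵥ θ) := by
      funext θ; simp only [hL]; ring
    rw [he]; exact h
  obtain ⟨CG, hCG⟩ : ∃ C : (Fin D → ℝ) → ℝ,
      C = fun θ => Cloo θ + (1/N : ℝ) * L θ := ⟨_, rfl⟩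
  have hCGCvx : IsCvx CG := by rw [hCG]; exact hClooCvx.add hLCvx
  have hGEq : ∀ θ, G θ = CG θ + lam / 2 * (θ ⬝ᵥ θ) := by
    intro θ; simp only [hGdef, hCG]; rw [hFlooEq]; ring
  have hGcvx : IsCvx G := by
    have hsc := strong_cvx CG hCGCvx lam hlam.le
    intro u v t ht0 ht1
    rw [hGEq, hGEq, hGEq]
    exact hsc u v t ht0 ht1
  -- Step 1: θhat minimizes G
  have hGmin : ∀ θ, G θhat ≤ G θ := by
    intro θ
    obtain ⟨δ, hδ⟩ : ∃ d : ℝ, d = x n ⬝ᵥ θ - a := ⟨_, rfl⟩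
    have key : ∀ t : ℝ, 0 < t → t ≤ 1 →
        G θhat - G θ ≤ (1/N : ℝ) * ((g (a + t * δ) - g a) / t - D1 n * δ) := by
      intro t ht0 ht1
      have hdot : x n ⬝ᵥ ((1 - t) • θhat + t • θ) = a + t * δ := by
        rw [dot_seg, hδ, ha]; ring
      have h2 : F ((1 - t) • θhat + t • θ)
          = G ((1 - t) • θhat + t • θ) + (1/N : ℝ) * (g (a + t * δ) - g a - D1 n * (t * δ)) := by
        rw [hsplit _, hdot]
        simp only [hGdef, hL]
        rw [hdot]
        ring
      have h3 : F θhat = G θhat := by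
        rw [hsplit θhat]
        simp only [hGdef, hL]
        rw [← ha]
        ring
      have h1 : F θhat ≤ F ((1 - t) • θhat + t • θ) := hθhat _
      have h4 : G ((1 - t) • θhat + t • θ) ≤ (1 - t) * G θhat + t * G θ :=
        hGcvx θhat θ t ht0.le ht1
      have h5 : t * (G θhat - G θ) ≤ (1/N : ℝ) * (g (a + t * δ) - g a - D1 n * (t * δ)) := by
        nlinarith [h1, h2, h3, h4]
      have h6 : (1/N : ℝ) * ((g (a + t * δ) - g a) / t - D1 n * δ)
          = ((1/N : ℝ) * (g (a + t * δ) - g a - D1 n * (t * δ))) / t := by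
        field_simp
      rw [h6, le_div_iff₀ ht0]
      linarith
    have hlin : HasDerivAt (fun t : ℝ => a + t * δ) δ 0 := by
      simpa using ((hasDerivAt_id (0:ℝ)).mul_const δ).const_add a
    have hcomp : HasDerivAt (fun t : ℝ => g (a + t * δ)) (D1 n * δ) 0 := by
      have hg0 : HasDerivAt g (D1 n) ((fun t : ℝ => a + t * δ) 0) := by simpa using hd
      have h := HasDerivAt.comp (0:ℝ) hg0 hlin
      exact h
    have hslope : Filter.Tendsto (fun t : ℝ => (g (a + t * δ) - g a) / t)
        (nhdsWithin 0 {(0:ℝ)}ᶜ) (nhds (D1 n * δ)) := by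
      have h := hasDerivAt_iff_tendsto_slope.mp hcomp
      have heq : slope (fun t : ℝ => g (a + t * δ)) 0
          = fun t : ℝ => (g (a + t * δ) - g a) / t := by
        funext t
        rw [slope_def_field]
        simp
      rwa [heq] at h
    have htend : Filter.Tendsto
        (fun t : ℝ => (1/N : ℝ) * ((g (a + t * δ) - g a) / t - D1 n * δ))
        (nhdsWithin 0 (Set.Ioi 0)) (nhds 0) := by
      have h1 := hslope.mono_left
        (nhdsWithin_mono 0 fun z hz => Set.mem_compl_singleton_iff.mpr (ne_of_gt hz))
      have h2 := h1.sub_const (D1 n * δ)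
      have h3 := h2.const_mul (1/N : ℝ)
      rw [sub_self, mul_zero] at h3
      exact h3
    have hle : G θhat - G θ ≤ 0 := by
      refine ge_of_tendsto htend ?_
      filter_upwards [Ioc_mem_nhdsGT_of_mem (Set.mem_Ico.mpr ⟨le_refl (0:ℝ), zero_lt_one⟩)] with t ht
      exact key t ht.1 ht.2
    linarith
  -- Step 2: growth for G at θhat
  have hGmin' : ∀ θ, CG θhat + lam / 2 * (θhat ⬝ᵥ θhat) ≤ CG θ + lam / 2 * (θ ⬝ᵥ θ) := by
    intro θ; rw [← hGEq, ← hGEq]; exact hGmin θ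
  have hgrowG := growth CG hCGCvx lam hlam θhat hGmin' (θloo n)
  -- Step 3: growth for Floo n at θloo n
  have hFloomin : ∀ θ, Cloo (θloo n) + lam / 2 * (θloo n ⬝ᵥ θloo n) ≤ Cloo θ + lam / 2 * (θ ⬝ᵥ θ) := by
    intro θ; rw [← hFlooEq, ← hFlooEq]; exact hθloo n θ
  have hgrowF := growth Cloo hClooCvx lam hlam (θloo n) hFloomin θhat
  obtain ⟨Q, hQ⟩ : ∃ q : ℝ, q = (θhat - θloo n) ⬝ᵥ (θhat - θloo n) := ⟨_, rfl⟩
  have hQsymm : (θloo n - θhat) ⬝ᵥ (θloo n - θhat) = Q := by rw [hQ]; exact dot_sub_symm _ _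
  rw [hQsymm] at hgrowF
  rw [← hQ] at hgrowG
  obtain ⟨p, hp⟩ : ∃ p : ℝ, p = x n ⬝ᵥ θloo n - a := ⟨_, rfl⟩
  have hkey2 : lam * Q ≤ (1/N : ℝ) * (D1 n * p) := by
    have hGF : ∀ θ, CG θ = Cloo θ + (1/N : ℝ) * L θ := fun θ => by rw [hCG]
    have hLhat : L θhat = g a := by simp only [hL]; rw [← ha]; ring
    have hLloo : L (θloo n) = g a + D1 n * p := by simp only [hL]; rw [hp]
    rw [hGF, hGF, hLhat, hLloo] at hgrowG
    linarith
  obtain ⟨X, hX⟩ : ∃ X : ℝ, X = x n ⬝ᵥ x n := ⟨_, rfl⟩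
  have hQ0 : 0 ≤ Q := by rw [hQ]; exact dot_self_nonneg' _
  have hX0 : 0 ≤ X := by rw [hX]; exact dot_self_nonneg' _
  have hCS : p ^ 2 ≤ X * Q := by
    have h := Finset.sum_mul_sq_le_sq_mul_sq Finset.univ (fun i => x n i)
      (fun i => θloo n i - θhat i)
    have hpeq : p = ∑ i, x n i * (θloo n i - θhat i) := by
      rw [hp, ha]
      simp only [dotProduct, ← Finset.sum_sub_distrib]
      exact Finset.sum_congr rfl fun i _ => by ring
    have hXeq : X = ∑ i, x n i ^ 2 := by
      rw [hX]
      simp only [dotProduct, pow_two]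
    have hQeq : Q = ∑ i, (θloo n i - θhat i) ^ 2 := by
      rw [← hQsymm]
      simp only [dotProduct, Pi.sub_apply, pow_two]
    rw [hpeq, hXeq, hQeq]
    exact h
  have hNlam : (0:ℝ) < (N:ℝ) * lam := by positivity
  have hkey2N : (N:ℝ) * lam * Q ≤ |D1 n| * |p| := by
    have h := mul_le_mul_of_nonneg_left hkey2 hNpos.le
    have he : (N:ℝ) * ((1/N : ℝ) * (D1 n * p)) = D1 n * p := by field_simp
    rw [he] at h
    have habs : D1 n * p ≤ |D1 n| * |p| := by
      calc D1 n * p ≤ |D1 n * p| := le_abs_self _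
        _ = |D1 n| * |p| := abs_mul _ _
    nlinarith
  have hpbound : |p| ≤ |D1 n| * X / ((N:ℝ) * lam) := by
    rcases eq_or_lt_of_le (abs_nonneg p) with h0 | hppos
    · rw [← h0]
      positivity
    · rw [le_div_iff₀ hNlam]
      have t1 : ((N:ℝ) * lam) * p ^ 2 ≤ ((N:ℝ) * lam) * (X * Q) :=
        mul_le_mul_of_nonneg_left hCS hNlam.le
      have t2 : X * ((N:ℝ) * lam * Q) ≤ X * (|D1 n| * |p|) :=
        mul_le_mul_of_nonneg_left hkey2N hX0
      nlinarith [sq_abs p]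
  have hseg : x n ⬝ᵥ ((1 - s) • θhat + s • θloo n) = a + s * p := by
    rw [dot_seg, hp, ha]
    ring
  rw [hseg, ← ha, ← hX]
  calc |a + s * p| ≤ |a| + |s * p| := abs_add_le _ _
    _ = |a| + s * |p| := by rw [abs_mul, abs_of_nonneg hs0]
    _ ≤ |a| + |p| := by nlinarith [abs_nonneg p]
    _ ≤ |a| + |D1 n| * X / ((N:ℝ) * lam) := by linarith
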